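/- arXiv:1809.01493 — 2 statements merged into one kernel-verified Lean document; each statement's English description precedes it below -/
import Mathlib

section
/- Let G be a group with a normal subgroup N such that N is isomorphic to the infinite cyclic group ℤ and the quotient G/N is isomorphic to ℤ. Then G is isomorphic either to ℤ × ℤ (the fundamental group of the torus) or to the Klein bottle group, i.e. the group presented as ⟨a, b | a b a b⁻¹⟩. -/
/-- The single relator `a * b * a * b⁻¹` of the Klein bottle group, in the free
group on two generators (`0` plays the role of `a`, `1` the role of `b`). -/
def kleinBottleRels : Set (FreeGroup (Fin 2)) :=
  {FreeGroup.of 0 * FreeGroup.of 1 * FreeGroup.of 0 * (FreeGroup.of 1)⁻¹}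

/-- The Klein bottle group `⟨a, b | a b a b⁻¹⟩`. -/
def KleinBottleGroup : Type := PresentedGroup kleinBottleRels

instance : Group KleinBottleGroup := by unfold KleinBottleGroup; infer_instance

/-- The relation holds in the Klein bottle group. -/
theorem klein_rel :
    (PresentedGroup.of 0 * PresentedGroup.of 1 * PresentedGroup.of 0 *
      (PresentedGroup.of 1)⁻¹ : PresentedGroup kleinBottleRels) = 1 := by
  have h : (PresentedGroup.mk kleinBottleRels)
      (FreeGroup.of 0 * FreeGroup.of 1 * FreeGroup.of 0 * (FreeGroup.of 1)⁻¹) = 1 := by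
    apply (QuotientGroup.eq_one_iff _).2
    exact Subgroup.subset_normalClosure rfl
  simpa [map_mul, map_inv, PresentedGroup.of] using h

/-- Every extension of `ℤ` by `ℤ` is isomorphic either to `ℤ × ℤ` (the fundamental
group of the torus) or to the Klein bottle group `⟨a, b | a b a b⁻¹⟩`. -/
theorem extension_of_int_by_int_iso_torus_or_klein
    (G : Type) [Group G] (N : Subgroup G) [N.Normal]
    (hN : Nonempty (N ≃* Multiplicative ℤ))
    (hQ : Nonempty ((G ⧸ N) ≃* Multiplicative ℤ)) :
    Nonempty (G ≃* Multiplicative ℤ × Multiplicative ℤ) ∨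
      Nonempty (G ≃* KleinBottleGroup) := by
  obtain ⟨e⟩ := hN
  obtain ⟨q⟩ := hQ
  set nn : N := e.symm (Multiplicative.ofAdd 1) with hnn
  set n : G := (nn : G) with hn
  have hn_mem : n ∈ N := nn.2
  have hofAdd : ∀ m : ℤ, (Multiplicative.ofAdd (1 : ℤ)) ^ m = Multiplicative.ofAdd m := by
    intro m
    rw [← ofAdd_zsmul]
    simp
  -- every element of N is a power of n
  have hNn : ∀ g ∈ N, ∃ m : ℤ, g = n ^ m := by
    intro g hg
    refine ⟨(e ⟨g, hg⟩).toAdd, ?_⟩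
    have h1 : (⟨g, hg⟩ : N) = nn ^ (e ⟨g, hg⟩).toAdd := by
      apply e.injective
      rw [map_zpow]
      simp only [hnn, MulEquiv.apply_symm_apply]
      rw [hofAdd]
      simp
    have := congrArg (Subtype.val) h1
    simpa using this
  -- n has infinite order
  have hn1 : ∀ m : ℤ, n ^ m = 1 → m = 0 := by
    intro m hm
    have h1 : nn ^ m = 1 := by
      apply Subtype.ext
      simpa using hm
    have h2 := congrArg e h1
    rw [map_zpow, map_one] at h2
    simp only [hnn, MulEquiv.apply_symm_apply, hofAdd] at h2
    simpa using h2
  -- a lift of a generator of the quotient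
  obtain ⟨t, ht⟩ := QuotientGroup.mk_surjective (q.symm (Multiplicative.ofAdd 1))
  have hq_t : q (QuotientGroup.mk t) = Multiplicative.ofAdd 1 := by rw [ht]; simp
  -- `n^a * t^b = 1` forces `a = b = 0`
  have hpow : ∀ a b : ℤ, n ^ a * t ^ b = 1 → a = 0 ∧ b = 0 := by
    intro a b h
    have hquot := congrArg (QuotientGroup.mk (s := N)) h
    rw [QuotientGroup.mk_mul, QuotientGroup.mk_zpow, QuotientGroup.mk_zpow] at hquot
    have hnq : (QuotientGroup.mk n : G ⧸ N) = 1 := (QuotientGroup.eq_one_iff _).2 hn_mem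
    rw [hnq, one_zpow, one_mul] at hquot
    have hb : b = 0 := by
      have := congrArg q hquot
      rw [map_zpow, hq_t, hofAdd] at this
      simpa using this
    subst hb
    rw [zpow_zero, mul_one] at h
    exact ⟨hn1 a h, rfl⟩
  -- every element of G is of the form n^a * t^b
  have hsurj : ∀ g : G, ∃ a b : ℤ, g = n ^ a * t ^ b := by
    intro g
    set b : ℤ := (q (QuotientGroup.mk g)).toAdd with hb
    have hmem : g * t ^ (-b) ∈ N := by
      rw [← QuotientGroup.eq_one_iff]
      rw [QuotientGroup.mk_mul, QuotientGroup.mk_zpow]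
      apply q.injective
      rw [map_mul, map_zpow, map_one, hq_t, hofAdd]
      simp [hb]
    obtain ⟨a, ha⟩ := hNn _ hmem
    refine ⟨a, b, ?_⟩
    have : g = n ^ a * (t ^ (-b))⁻¹ := by
      rw [← ha]; group
    simpa [zpow_neg] using this
  -- conjugation of n by t
  have hNormal : N.Normal := inferInstance
  obtain ⟨ε, hε⟩ := hNn _ (hNormal.conj_mem _ hn_mem t)
  obtain ⟨δ, hδ⟩ := hNn _ (by simpa using hNormal.conj_mem _ hn_mem t⁻¹ :
    t⁻¹ * n * t ∈ N)
  have hεδ : ε * δ = 1 := by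
    have h1 : n = t⁻¹ * (t * n * t⁻¹) * t := by group
    rw [hε] at h1
    have h2 : t⁻¹ * n ^ ε * t = (t⁻¹ * n * t) ^ ε := by
      have := conj_zpow (i := ε) (a := t⁻¹) (b := n)
      simpa using this.symm
    rw [h2, hδ, ← zpow_mul] at h1
    have h3 : n ^ (δ * ε - 1) = 1 := by
      rw [zpow_sub, ← h1]
      simp
    have h4 := hn1 _ h3
    have h5 : δ * ε = 1 := by linarith
    rw [mul_comm]
    exact h5
  rcases Int.eq_one_or_neg_one_of_mul_eq_one hεδ with h1 | h1
  · -- torus case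
    subst h1
    rw [zpow_one] at hε
    have hcomm : Commute n t := by
      have : t * n = n * t := by
        have := congrArg (· * t) hε
        simpa [mul_assoc] using this
      exact this.symm
    left
    refine ⟨(MulEquiv.ofBijective
      ({ toFun := fun p => n ^ p.1.toAdd * t ^ p.2.toAdd
         map_one' := by simp
         map_mul' := by
           intro p r
           simp only [Prod.fst_mul, Prod.snd_mul, toAdd_mul, zpow_add]
           have hc : Commute (t ^ p.2.toAdd) (n ^ r.1.toAdd) :=
             (hcomm.symm).zpow_zpow _ _
           exact (hc.mul_mul_mul_comm _ _).symm } :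
        Multiplicative ℤ × Multiplicative ℤ →* G) ⟨?_, ?_⟩).symm⟩
    · rw [injective_iff_map_eq_one]
      intro p hp
      obtain ⟨ha, hb⟩ := hpow _ _ hp
      have : p = (1, 1) := by
        ext <;> simpa using ‹_›
      exact this
    · intro g
      obtain ⟨a, b, hg⟩ := hsurj g
      exact ⟨(Multiplicative.ofAdd a, Multiplicative.ofAdd b), hg.symm⟩
  · -- Klein bottle case
    subst h1
    have hconj : t * n * t⁻¹ = n⁻¹ := by rw [hε, zpow_neg_one]
    have hf : ∀ r ∈ kleinBottleRels, FreeGroup.lift (![n, t]) r = 1 := by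
      intro r hr
      rcases hr with rfl
      simp only [map_mul, map_inv, FreeGroup.lift_apply_of]
      show n * t * n * t⁻¹ = 1
      have h2 : n * t * n * t⁻¹ = n * (t * n * t⁻¹) := by group
      rw [h2, hconj, mul_inv_cancel]
    set φ := PresentedGroup.toGroup hf with hφ
    set A : PresentedGroup kleinBottleRels := PresentedGroup.of 0 with hA
    set B : PresentedGroup kleinBottleRels := PresentedGroup.of 1 with hB
    have hφA : φ A = n := by simp [hφ, hA]
    have hφB : φ B = t := by simp [hφ, hB]
    have hrel : A * B * A * B⁻¹ = 1 := klein_rel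
    have hBA : B * A * B⁻¹ = A⁻¹ := by
      have h2 : B * A * B⁻¹ = A⁻¹ * (A * B * A * B⁻¹) := by group
      rw [hrel, mul_one] at h2
      exact h2
    have hBA' : B⁻¹ * A * B = A⁻¹ := by
      have h2 : B⁻¹ * A⁻¹ * B = A := by rw [← hBA]; group
      have h3 : B⁻¹ * A * B = (B⁻¹ * A⁻¹ * B)⁻¹ := by group
      rw [h2] at h3
      exact h3
    have hBc : ∀ c : ℤ, B * A ^ c = A ^ (-c) * B := by
      intro c
      have h2 : (B * A * B⁻¹) ^ c = B * A ^ c * B⁻¹ := conj_zpow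
      rw [hBA] at h2
      have h3 := congrArg (· * B) h2.symm
      simpa [mul_assoc, inv_zpow, zpow_neg] using h3
    have hB'c : ∀ c : ℤ, B⁻¹ * A ^ c = A ^ (-c) * B⁻¹ := by
      intro c
      have h2 : (B⁻¹ * A * (B⁻¹)⁻¹) ^ c = B⁻¹ * A ^ c * (B⁻¹)⁻¹ := conj_zpow
      rw [inv_inv, hBA'] at h2
      have h3 := congrArg (· * B⁻¹) h2.symm
      simpa [mul_assoc, inv_zpow, zpow_neg] using h3
    have hswap : ∀ b : ℤ, (∀ c : ℤ, B ^ b * A ^ c = A ^ c * B ^ b) ∨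
        (∀ c : ℤ, B ^ b * A ^ c = A ^ (-c) * B ^ b) := by
      intro b
      induction b using Int.induction_on with
      | zero => left; intro c; simp
      | succ k ih =>
        rcases ih with ih | ih
        · right
          intro c
          have : B ^ ((k : ℤ) + 1) * A ^ c = B ^ (k : ℤ) * (B * A ^ c) := by
            rw [zpow_add, zpow_one]; group
          rw [this, hBc c, ← mul_assoc, ih (-c)]
          rw [zpow_add, zpow_one]; group
        · left
          intro c
          have : B ^ ((k : ℤ) + 1) * A ^ c = B ^ (k : ℤ) * (B * A ^ c) := by
            rw [zpow_add, zpow_one]; group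
          rw [this, hBc c, ← mul_assoc, ih (-c)]
          rw [zpow_add, zpow_one]
          simp only [neg_neg]
          group
      | pred k ih =>
        rcases ih with ih | ih
        · right
          intro c
          have : B ^ (-(k : ℤ) - 1) * A ^ c = B ^ (-(k : ℤ)) * (B⁻¹ * A ^ c) := by
            rw [sub_eq_add_neg, zpow_add, zpow_neg_one]; group
          rw [this, hB'c c, ← mul_assoc, ih (-c)]
          rw [sub_eq_add_neg, zpow_add, zpow_neg_one]; group
        · left
          intro c
          have : B ^ (-(k : ℤ) - 1) * A ^ c = B ^ (-(k : ℤ)) * (B⁻¹ * A ^ c) := by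
            rw [sub_eq_add_neg, zpow_add, zpow_neg_one]; group
          rw [this, hB'c c, ← mul_assoc, ih (-c)]
          rw [sub_eq_add_neg, zpow_add, zpow_neg_one]
          simp only [neg_neg]
          group
    -- normal form in the Klein bottle group
    have hform : ∀ x : PresentedGroup kleinBottleRels, ∃ a b : ℤ, x = A ^ a * B ^ b := by
      intro x
      have hx : x ∈ Subgroup.closure
          (Set.range (PresentedGroup.of : Fin 2 → PresentedGroup kleinBottleRels)) := by
        rw [PresentedGroup.closure_range_of]; trivial
      induction hx using Subgroup.closure_induction with
      | mem y hy =>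
        obtain ⟨i, rfl⟩ := hy
        fin_cases i
        · exact ⟨1, 0, by simp [hA]⟩
        · exact ⟨0, 1, by simp [hB]⟩
      | one => exact ⟨0, 0, by simp⟩
      | mul y z _ _ hy hz =>
        obtain ⟨a, b, rfl⟩ := hy
        obtain ⟨c, d, rfl⟩ := hz
        have h2 : A ^ a * B ^ b * (A ^ c * B ^ d) = A ^ a * (B ^ b * A ^ c) * B ^ d := by
          group
        rcases hswap b with hs | hs
        · exact ⟨a + c, b + d, by rw [h2, hs c, zpow_add, zpow_add]; group⟩
        · exact ⟨a + -c, b + d, by rw [h2, hs c, zpow_add, zpow_add]; group⟩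
      | inv y _ hy =>
        obtain ⟨a, b, rfl⟩ := hy
        have h2 : (A ^ a * B ^ b)⁻¹ = B ^ (-b) * A ^ (-a) := by
          rw [zpow_neg, zpow_neg]; group
        rcases hswap (-b) with hs | hs
        · exact ⟨-a, -b, by rw [h2, hs (-a)]⟩
        · exact ⟨a, -b, by rw [h2, hs (-a), neg_neg]⟩
    right
    refine ⟨(MulEquiv.ofBijective φ ⟨?_, ?_⟩).symm⟩
    · rw [injective_iff_map_eq_one]
      intro x hx
      obtain ⟨a, b, rfl⟩ := hform x
      rw [map_mul, map_zpow, map_zpow, hφA, hφB] at hx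
      obtain ⟨ha, hb⟩ := hpow _ _ hx
      rw [ha, hb]
      simp
    · intro g
      obtain ⟨a, b, hg⟩ := hsurj g
      exact ⟨A ^ a * B ^ b, by rw [map_mul, map_zpow, map_zpow, hφA, hφB, hg]⟩
end

section
/- Let G be a group admitting subgroups G₀ ⊇ G₁ ⊇ G₂ such that G₂ is trivial, G₁ is normal in G₀ with G₀/G₁ ≅ ℤ, G₁ ≅ ℤ, and G₀ has finite index in G (i.e. G is VPC(2)). Then G has a finite-index subgroup isomorphic either to ℤ × ℤ (the fundamental group of the torus) or to the Klein bottle group ⟨a, b | a b a b⁻¹⟩. -/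
/-- In any group, if `v * u * v⁻¹ = u⁻¹`, then powers of `v` can be moved past
powers of `u` (changing the exponent of `u`). -/
lemma conj_swap_aux {G : Type*} [Group G] {u v : G} (h : v * u * v⁻¹ = u⁻¹) :
    ∀ (n m : ℤ), ∃ m' : ℤ, v ^ n * u ^ m = u ^ m' * v ^ n := by
  have h1 : ∀ m : ℤ, v * u ^ m = u ^ (-m) * v := by
    intro m
    have : v * u ^ m * v⁻¹ = u ^ (-m) := by
      rw [← conj_zpow, h, inv_zpow']
    calc v * u ^ m = (v * u ^ m * v⁻¹) * v := by group
    _ = u ^ (-m) * v := by rw [this]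
  have hv : v⁻¹ * u * v = u⁻¹ := by
    have h' : u = v⁻¹ * u⁻¹ * v := by rw [← h]; group
    calc v⁻¹ * u * v = (v⁻¹ * u⁻¹ * v)⁻¹ := by group
    _ = u⁻¹ := by rw [← h']
  have h2 : ∀ m : ℤ, v⁻¹ * u ^ m = u ^ (-m) * v⁻¹ := by
    intro m
    have : v⁻¹ * u ^ m * v = u ^ (-m) := by
      have hc : (v⁻¹ * u * v⁻¹⁻¹) ^ m = v⁻¹ * u ^ m * v⁻¹⁻¹ := conj_zpow
      rw [inv_inv] at hc
      rw [← hc, hv, inv_zpow']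
    calc v⁻¹ * u ^ m = (v⁻¹ * u ^ m * v) * v⁻¹ := by group
    _ = u ^ (-m) * v⁻¹ := by rw [this]
  intro n
  induction n using Int.induction_on with
  | zero => intro m; exact ⟨m, by simp⟩
  | succ k ih =>
      intro m
      obtain ⟨m', hm'⟩ := ih (-m)
      refine ⟨m', ?_⟩
      have e1 : v ^ ((k : ℤ) + 1) * u ^ m = v ^ (k : ℤ) * (v * u ^ m) := by
        rw [zpow_add, zpow_one, mul_assoc]
      rw [e1, h1 m, ← mul_assoc, hm', mul_assoc, ← zpow_add_one]
  | pred k ih =>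
      intro m
      obtain ⟨m', hm'⟩ := ih (-m)
      refine ⟨m', ?_⟩
      have e1 : v ^ (-(k : ℤ) - 1) * u ^ m = v ^ (-(k : ℤ)) * (v⁻¹ * u ^ m) := by
        rw [sub_eq_add_neg, zpow_add, zpow_neg_one, mul_assoc]
      rw [e1, h2 m, ← mul_assoc, hm', mul_assoc, ← zpow_sub_one]

/-- A `VPC(2)` group is virtually either the fundamental group of the torus
(`ℤ × ℤ`) or the fundamental group of the Klein bottle: if `G` has subgroups
`G₀ ⊇ G₁ ⊇ G₂` with `G₂` trivial, `G₁` normal in `G₀` with `G₀/G₁ ≅ ℤ`,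
`G₁ ≅ ℤ`, and `G₀` of finite index in `G`, then `G` has a finite-index
subgroup isomorphic to `ℤ × ℤ` or to the Klein bottle group. -/
theorem vpc2_virtually_torus_or_klein
    (G : Type) [Group G] (G₀ G₁ G₂ : Subgroup G)
    (hG2 : G₂ = ⊥)
    (h10 : G₁ ≤ G₀)
    (hquot : ∃ _ : (G₁.subgroupOf G₀).Normal,
      Nonempty ((G₀ ⧸ G₁.subgroupOf G₀) ≃* Multiplicative ℤ))
    (hG1 : Nonempty (G₁ ≃* Multiplicative ℤ))
    (hfin : G₀.FiniteIndex) :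
    ∃ H : Subgroup G, H.FiniteIndex ∧
      (Nonempty (H ≃* Multiplicative ℤ × Multiplicative ℤ) ∨
        Nonempty (H ≃* KleinBottleGroup)) := by
  refine ⟨G₀, hfin, ?_⟩
  obtain ⟨hnorm, ⟨ψ⟩⟩ := hquot
  obtain ⟨e⟩ := hG1
  -- the projection onto `Multiplicative ℤ`
  set π : G₀ →* Multiplicative ℤ :=
    ψ.toMonoidHom.comp (QuotientGroup.mk' (G₁.subgroupOf G₀)) with hπ
  have hπsurj : Function.Surjective π :=
    ψ.surjective.comp (QuotientGroup.mk'_surjective _)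
  have hker : ∀ g : G₀, π g = 1 ↔ (g : G) ∈ G₁ := by
    intro g
    rw [hπ, MonoidHom.comp_apply]
    constructor
    · intro hg
      have h1 : ψ (QuotientGroup.mk' (G₁.subgroupOf G₀) g) = ψ 1 := by simpa using hg
      have h2 := ψ.injective h1
      simpa [Subgroup.mem_subgroupOf] using h2
    · intro hg
      have : QuotientGroup.mk' (G₁.subgroupOf G₀) g = 1 :=
        (QuotientGroup.eq_one_iff g).mpr (by simpa [Subgroup.mem_subgroupOf] using hg)
      rw [this]; simp
  obtain ⟨T, hT⟩ := hπsurj (Multiplicative.ofAdd 1)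
  set ξ : G₁ := e.symm (Multiplicative.ofAdd 1) with hξ
  set X : G₀ := ⟨(ξ : G), h10 ξ.2⟩ with hXdef
  -- powers of X
  have hXpow : ∀ m : ℤ, ((X ^ m : G₀) : G) = ((ξ ^ m : G₁) : G) := by
    intro m; push_cast [hXdef]; rfl
  have hXone : ∀ m : ℤ, X ^ m = 1 → m = 0 := by
    intro m hm
    have : (ξ ^ m : G₁) = 1 := by
      apply Subtype.ext
      rw [← hXpow m, hm]; rfl
    have := congrArg e this
    rw [map_zpow, map_one, hξ, MulEquiv.apply_symm_apply] at this
    have : (m : ℤ) • (1 : ℤ) = 0 := by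
      have := congrArg Multiplicative.toAdd this
      simpa [← ofAdd_zsmul] using this
    simpa using this
  have hgen : ∀ y : G₀, (y : G) ∈ G₁ → ∃ m : ℤ, y = X ^ m := by
    intro y hy
    refine ⟨Multiplicative.toAdd (e ⟨(y : G), hy⟩), ?_⟩
    apply Subtype.ext
    rw [hXpow]
    have : (⟨(y : G), hy⟩ : G₁) = ξ ^ (Multiplicative.toAdd (e ⟨(y : G), hy⟩)) := by
      apply e.injective
      rw [map_zpow, hξ, MulEquiv.apply_symm_apply, ← ofAdd_zsmul]
      simp
    exact congrArg (fun z : G₁ => (z : G)) this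
  -- π on X and T powers
  have hπX : π X = 1 := (hker X).mpr ξ.2
  have hπform : ∀ m n : ℤ, π (X ^ m * T ^ n) = Multiplicative.ofAdd n := by
    intro m n
    rw [map_mul, map_zpow, map_zpow, hπX, hT, one_zpow, one_mul, ← ofAdd_zsmul]
    simp
  -- uniqueness of the normal form
  have huniq : ∀ m n : ℤ, X ^ m * T ^ n = 1 → m = 0 ∧ n = 0 := by
    intro m n hmn
    have hn : n = 0 := by
      have := hπform m n
      rw [hmn, map_one] at this
      have := congrArg Multiplicative.toAdd this
      simpa using this.symm
    subst hn
    simp only [zpow_zero, mul_one] at hmn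
    exact ⟨hXone m hmn, rfl⟩
  -- existence of the normal form
  have hform : ∀ g : G₀, ∃ m n : ℤ, g = X ^ m * T ^ n := by
    intro g
    set n : ℤ := Multiplicative.toAdd (π g) with hn
    have hmem : ((g * T ^ (-n) : G₀) : G) ∈ G₁ := by
      apply (hker _).mp
      rw [map_mul, map_zpow, hT, ← ofAdd_zsmul]
      simp [hn]
    obtain ⟨m, hm⟩ := hgen _ hmem
    exact ⟨m, n, by rw [← hm]; group⟩
  -- conjugation of X by T
  have hTX : ∃ k : ℤ, T * X * T⁻¹ = X ^ k := by
    apply hgen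
    have : (T * X * T⁻¹ : G₀) ∈ G₁.subgroupOf G₀ := by
      exact hnorm.conj_mem X (Subgroup.mem_subgroupOf.mpr ξ.2) T
    simpa [Subgroup.mem_subgroupOf] using this
  have hT'X : ∃ l : ℤ, T⁻¹ * X * T = X ^ l := by
    apply hgen
    have : (T⁻¹ * X * T : G₀) ∈ G₁.subgroupOf G₀ := by
      have := hnorm.conj_mem X (Subgroup.mem_subgroupOf.mpr ξ.2) T⁻¹
      simpa using this
    simpa [Subgroup.mem_subgroupOf] using this
  obtain ⟨k, hk⟩ := hTX
  obtain ⟨l, hl⟩ := hT'X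
  have hkl : l * k = 1 := by
    have e1 : (T⁻¹ * X * T) ^ k = T⁻¹ * X ^ k * T := by
      have := conj_zpow (i := k) (a := T⁻¹) (b := X)
      simpa using this
    have : X = (T⁻¹ * X * T) ^ k := by
      rw [e1, ← hk]; group
    rw [hl, ← zpow_mul] at this
    have : X ^ (l * k - 1) = 1 := by
      rw [zpow_sub, zpow_one, ← this]; simp
    have := hXone _ this
    omega
  have hk1 : k = 1 ∨ k = -1 := Int.isUnit_iff.mp (IsUnit.of_mul_eq_one (a := k) l (by rw [mul_comm]; exact hkl))
  rcases hk1 with hk1 | hk1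
  · -- torus case
    subst hk1
    rw [zpow_one] at hk
    left
    have hC : Commute X T := by
      have : X * T = T * X := by
        calc X * T = (T * X * T⁻¹) * T := by rw [hk]
        _ = T * X := by group
      exact this
    set f : Multiplicative ℤ × Multiplicative ℤ →* G₀ :=
      MonoidHom.noncommCoprod (zpowersHom _ X) (zpowersHom _ T)
        (fun a b => (hC.zpow_zpow a.toAdd b.toAdd)) with hf
    have hfval : ∀ p : Multiplicative ℤ × Multiplicative ℤ,
        f p = X ^ p.1.toAdd * T ^ p.2.toAdd := fun p => rfl
    have hbij : Function.Bijective f := by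
      constructor
      · rw [injective_iff_map_eq_one]
        intro p hp
        rw [hfval] at hp
        obtain ⟨h1, h2⟩ := huniq _ _ hp
        have : p = (Multiplicative.ofAdd 0, Multiplicative.ofAdd 0) := by
          ext
          · simpa using h1
          · simpa using h2
        rw [this]; rfl
      · intro g
        obtain ⟨m, n, hg⟩ := hform g
        exact ⟨(Multiplicative.ofAdd m, Multiplicative.ofAdd n), by rw [hfval]; simpa using hg.symm⟩
    exact ⟨(MulEquiv.ofBijective f hbij).symm⟩
  · -- Klein bottle case
    subst hk1
    have hk' : T * X * T⁻¹ = X⁻¹ := by rw [hk]; simp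
    right
    set fgen : Fin 2 → G₀ := ![X, T] with hfgen
    have hrels : ∀ r ∈ kleinBottleRels, FreeGroup.lift fgen r = 1 := by
      intro r hr
      simp only [kleinBottleRels, Set.mem_singleton_iff] at hr
      subst hr
      simp only [map_mul, map_inv, FreeGroup.lift_apply_of, hfgen]
      show X * T * X * T⁻¹ = 1
      have : X * T * X * T⁻¹ = X * (T * X * T⁻¹) := by group
      rw [this, hk']
      simp
    set F : PresentedGroup kleinBottleRels →* G₀ := PresentedGroup.toGroup hrels with hF
    set A : PresentedGroup kleinBottleRels := PresentedGroup.of 0 with hA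
    set B : PresentedGroup kleinBottleRels := PresentedGroup.of 1 with hB
    have hFA : F A = X := PresentedGroup.toGroup.of hrels
    have hFB : F B = T := PresentedGroup.toGroup.of hrels
    have hABr : A * B * A * B⁻¹ = 1 := by
      have hmem : (FreeGroup.of 0 * FreeGroup.of 1 * FreeGroup.of 0 * (FreeGroup.of 1)⁻¹ :
          FreeGroup (Fin 2)) ∈ Subgroup.normalClosure kleinBottleRels :=
        Subgroup.subset_normalClosure rfl
      have : A * B * A * B⁻¹ = PresentedGroup.mk kleinBottleRels
          (FreeGroup.of 0 * FreeGroup.of 1 * FreeGroup.of 0 * (FreeGroup.of 1)⁻¹) := by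
        rw [hA, hB]
        simp only [map_mul, map_inv]
        rfl
      rw [this]
      exact (QuotientGroup.eq_one_iff _).mpr hmem
    have hBA : B * A * B⁻¹ = A⁻¹ := by
      have h1 : B * A * B⁻¹ = A⁻¹ * (A * B * A * B⁻¹) := by group
      rw [h1, hABr, mul_one]
    have hnfK : ∀ kk : PresentedGroup kleinBottleRels, ∃ m n : ℤ, kk = A ^ m * B ^ n := by
      intro kk
      induction kk with
      | _ z =>
        induction z using FreeGroup.induction_on with
        | C1 => exact ⟨0, 0, by simp⟩
        | of x =>
          fin_cases x
          · exact ⟨1, 0, by simp [hA]; rfl⟩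
          · exact ⟨0, 1, by simp [hB]; rfl⟩
        | inv_of x _ =>
          fin_cases x
          · exact ⟨-1, 0, by simp [hA]; rfl⟩
          · exact ⟨0, -1, by simp [hB]; rfl⟩
        | mul x y ihx ihy =>
          obtain ⟨m, n, hx⟩ := ihx
          obtain ⟨m', n', hy⟩ := ihy
          obtain ⟨m'', hswap⟩ := conj_swap_aux hBA n m'
          refine ⟨m + m'', n + n', ?_⟩
          have hmul : PresentedGroup.mk kleinBottleRels (x * y) =
              PresentedGroup.mk kleinBottleRels x * PresentedGroup.mk kleinBottleRels y :=
            map_mul _ _ _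
          rw [hmul, hx, hy]
          calc A ^ m * B ^ n * (A ^ m' * B ^ n')
              = A ^ m * (B ^ n * A ^ m') * B ^ n' := by group
            _ = A ^ m * (A ^ m'' * B ^ n) * B ^ n' := by rw [hswap]
            _ = A ^ (m + m'') * B ^ (n + n') := by rw [zpow_add, zpow_add]; group
    have hbij : Function.Bijective F := by
      constructor
      · rw [injective_iff_map_eq_one]
        intro kk hkk
        obtain ⟨m, n, rfl⟩ := hnfK kk
        rw [map_mul, map_zpow, map_zpow, hFA, hFB] at hkk
        obtain ⟨h1, h2⟩ := huniq _ _ hkk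
        rw [h1, h2]
        simp
      · intro g
        obtain ⟨m, n, hg⟩ := hform g
        exact ⟨A ^ m * B ^ n, by rw [map_mul, map_zpow, map_zpow, hFA, hFB, hg]⟩
    exact ⟨(MulEquiv.ofBijective F hbij).symm⟩
end
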